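/- Let t ≥ 1 and let G be a finite simple graph whose adjacency matrix has spectrum {(4t+1)^1, (2t−1)^{2t}, (−1)^{(t+1)^2}, (−3)^{t^2}}. Then for every vertex x of G, the number of edges of G joining two neighbors of x equals 4t^2 + 2t. -/

import Mathlib

open Polynomial Matrix SimpleGraph

/-- The `n × n`-grid: the Cartesian (box) product of two complete graphs on `Fin n`.
Vertices are pairs `(i, j)`, two distinct vertices being adjacent iff they agree in
exactly one coordinate. -/
def gridGraph (n : ℕ) : SimpleGraph (Fin n × Fin n) :=
  (⊤ : SimpleGraph (Fin n)) □ (⊤ : SimpleGraph (Fin n))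

/-- The `q`-clique extension of a graph `G`: the graph on `V × Fin q` in which `(x, i)`
and `(y, j)` are adjacent iff `x` and `y` are adjacent in `G`, or `x = y` and `i ≠ j`. -/
def cliqueExt {V : Type*} (q : ℕ) (G : SimpleGraph V) : SimpleGraph (V × Fin q) where
  Adj a b := G.Adj a.1 b.1 ∨ (a.1 = b.1 ∧ a.2 ≠ b.2)
  symm := by
    constructor
    rintro ⟨x, i⟩ ⟨y, j⟩ (h | ⟨h, hij⟩)
    · exact Or.inl h.symm
    · exact Or.inr ⟨h.symm, hij.symm⟩
  loopless := by
    constructor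
    rintro ⟨x, i⟩ (h | ⟨-, hij⟩)
    · exact G.loopless.irrefl x h
    · exact hij rfl

instance cliqueExtAdjDec {V : Type*} (q : ℕ) (G : SimpleGraph V) [DecidableRel G.Adj]
    [DecidableEq V] : DecidableRel (cliqueExt q G).Adj :=
  fun a b => inferInstanceAs (Decidable (G.Adj a.1 b.1 ∨ (a.1 = b.1 ∧ a.2 ≠ b.2)))

instance boxProdAdjDec {α β : Type*} (G : SimpleGraph α) (H : SimpleGraph β)
    [DecidableRel G.Adj] [DecidableRel H.Adj] [DecidableEq α] [DecidableEq β] :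
    DecidableRel (G □ H).Adj :=
  fun x y => inferInstanceAs (Decidable (G.Adj x.1 y.1 ∧ x.2 = y.2 ∨ H.Adj x.2 y.2 ∧ x.1 = y.1))

instance gridAdjDec (n : ℕ) : DecidableRel (gridGraph n).Adj := by
  unfold gridGraph; infer_instance


section AuxLemmas

section
variable {ι : Type*} [Fintype ι] [DecidableEq ι]

lemma my_charpoly_conj (U : Matrix.unitaryGroup ι ℝ) (D : Matrix ι ι ℝ) :
    ((U : Matrix ι ι ℝ) * D * star (U : Matrix ι ι ℝ)).charpoly = D.charpoly := by
  let f : Matrix ι ι ℝ →+* Matrix ι ι ℝ[X] := (C : ℝ →+* ℝ[X]).mapMatrix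
  have h1 : (U : Matrix ι ι ℝ) * star (U : Matrix ι ι ℝ) = 1 :=
    (Matrix.mem_unitaryGroup_iff).mp U.2
  have key : charmatrix ((U : Matrix ι ι ℝ) * D * star (U : Matrix ι ι ℝ))
      = f U * charmatrix D * f (star (U : Matrix ι ι ℝ)) := by
    rw [charmatrix, charmatrix, mul_sub, sub_mul]
    congr 1
    · have hc : f ↑U * Matrix.scalar ι (X : ℝ[X]) = Matrix.scalar ι (X : ℝ[X]) * f ↑U :=
        ((Matrix.scalar_commute (X : ℝ[X]) (fun r' => Commute.all _ _) (f ↑U))).symm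
      rw [hc, mul_assoc, ← _root_.map_mul, h1, f.map_one, mul_one]
    · rw [← _root_.map_mul, ← _root_.map_mul]
  have hdet : (f (star (U : Matrix ι ι ℝ))).det * (f (U : Matrix ι ι ℝ)).det = 1 := by
    rw [← det_mul, ← _root_.map_mul,
      show star (U : Matrix ι ι ℝ) * U = 1 from (Matrix.mem_unitaryGroup_iff').mp U.2,
      f.map_one, det_one]
  rw [Matrix.charpoly, Matrix.charpoly, key, det_mul, det_mul]
  linear_combination D.charmatrix.det * hdet

lemma my_charpoly_diagonal (d : ι → ℝ) :
    (Matrix.diagonal d).charpoly = ∏ i, (X - C (d i)) := by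
  have : charmatrix (Matrix.diagonal d) = Matrix.diagonal fun i => X - C (d i) := by
    ext i j
    by_cases h : i = j
    · subst h; simp [charmatrix_apply_eq]
    · simp [charmatrix_apply_ne _ _ _ h, Matrix.diagonal_apply_ne _ h]
  rw [Matrix.charpoly, this, det_diagonal]
end

lemma my_roots_eq (t : ℕ) {ι : Type*} [Fintype ι] (μ : ι → ℝ)
    (h : (∏ i, (X - C (μ i))) =
      (X - C (4 * (t : ℝ) + 1)) * (X - C (2 * (t : ℝ) - 1)) ^ (2 * t) *
        (X + 1) ^ ((t + 1) ^ 2) * (X + 3) ^ (t ^ 2)) :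
    (Finset.univ.val.map μ) = {(4*(t:ℝ)+1)} + (2*t) • {(2*(t:ℝ)-1)}
      + ((t+1)^2) • {(-1:ℝ)} + (t^2) • {(-3:ℝ)} := by
  have e1 : (X + 1 : ℝ[X]) = X - C (-1) := by rw [map_neg, Polynomial.C_1, sub_neg_eq_add]
  have e3 : (X + 3 : ℝ[X]) = X - C (-3) := by
    rw [show ((-3 : ℝ)) = -(3:ℝ) by norm_num, map_neg, sub_neg_eq_add, map_ofNat]
  rw [e1, e3] at h
  have hlhs : (∏ i, (X - C (μ i))).roots = Finset.univ.val.map μ := by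
    rw [show (∏ i, (X - C (μ i))) =
        ((Finset.univ.val.map μ).map (fun a : ℝ => X - C a)).prod by
      rw [Multiset.map_map]; rfl]
    exact roots_multiset_prod_X_sub_C _
  have m1 : (X - C (4 * (t : ℝ) + 1)).Monic := monic_X_sub_C _
  have m2 : ((X - C (2 * (t : ℝ) - 1)) ^ (2 * t)).Monic := (monic_X_sub_C _).pow _
  have m3 : ((X - C (-1 : ℝ)) ^ ((t + 1) ^ 2)).Monic := (monic_X_sub_C _).pow _
  have m4 : ((X - C (-3 : ℝ)) ^ (t ^ 2)).Monic := (monic_X_sub_C _).pow _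
  have hrhs := congrArg Polynomial.roots h
  rw [hlhs, roots_mul (((m1.mul m2).mul m3).mul m4).ne_zero,
    roots_mul ((m1.mul m2).mul m3).ne_zero, roots_mul (m1.mul m2).ne_zero,
    roots_pow, roots_pow, roots_pow, roots_X_sub_C, roots_X_sub_C, roots_X_sub_C,
    roots_X_sub_C] at hrhs
  exact hrhs

section
variable {ι : Type*} [Fintype ι] (μ : ι → ℝ) (t : ℕ)

lemma my_sum_eigen
    (hm : Finset.univ.val.map μ = {(4*(t:ℝ)+1)} + (2*t) • {(2*(t:ℝ)-1)}
      + ((t+1)^2) • {(-1:ℝ)} + (t^2) • {(-3:ℝ)}) (f : ℝ → ℝ) :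
    ∑ i, f (μ i) = f (4*(t:ℝ)+1) + (2*t) * f (2*(t:ℝ)-1)
      + ((t+1)^2 : ℕ) * f (-1) + ((t^2 : ℕ)) * f (-3) := by
  have h0 : ∑ i, f (μ i) = ((Finset.univ.val.map μ).map f).sum := by
    rw [Multiset.map_map]; rfl
  rw [h0, hm]
  simp [Multiset.map_nsmul, Multiset.sum_nsmul, nsmul_eq_mul]
  ring

lemma my_mem_eigen (ht : 1 ≤ t)
    (hm : Finset.univ.val.map μ = {(4*(t:ℝ)+1)} + (2*t) • {(2*(t:ℝ)-1)}
      + ((t+1)^2) • {(-1:ℝ)} + (t^2) • {(-3:ℝ)}) (i : ι) :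
    μ i = 4*(t:ℝ)+1 ∨ μ i = 2*(t:ℝ)-1 ∨ μ i = -1 ∨ μ i = -3 := by
  have : μ i ∈ Finset.univ.val.map μ :=
    Multiset.mem_map_of_mem μ (Finset.mem_univ i)
  rw [hm] at this
  have h2t : 2*t ≠ 0 := by positivity
  have ht1 : (t+1)^2 ≠ 0 := by positivity
  have ht2 : t^2 ≠ 0 := by positivity
  simp only [Multiset.mem_add, Multiset.mem_nsmul, Multiset.mem_singleton,
    h2t, ht1, ht2, false_or, ne_eq, not_false_iff, true_and] at this
  tauto

lemma my_card_eigen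
    (hm : Finset.univ.val.map μ = {(4*(t:ℝ)+1)} + (2*t) • {(2*(t:ℝ)-1)}
      + ((t+1)^2) • {(-1:ℝ)} + (t^2) • {(-3:ℝ)}) :
    Fintype.card ι = 1 + 2*t + (t+1)^2 + t^2 := by
  have := congrArg Multiset.card hm
  simp [Multiset.card_nsmul] at this
  omega

end

lemma my_card_pairs {V : Type*} [Fintype V] [DecidableEq V]
    (G : SimpleGraph V) [DecidableRel G.Adj] (x : V) :
    (Finset.univ.filter fun p : V × V => G.Adj x p.1 ∧ G.Adj p.1 p.2 ∧ G.Adj p.2 x).card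
      = 2 * (G.edgeFinset.filter fun e => ∀ v ∈ e, v ∈ G.neighborFinset x).card := by
  classical
  set S := Finset.univ.filter fun p : V × V => G.Adj x p.1 ∧ G.Adj p.1 p.2 ∧ G.Adj p.2 x with hS
  set T := G.edgeFinset.filter fun e => ∀ v ∈ e, v ∈ G.neighborFinset x with hT
  have hmaps : ∀ p ∈ S, Sym2.mk p.1 p.2 ∈ T := by
    rintro ⟨y, z⟩ hp
    simp only [hS, Finset.mem_filter, Finset.mem_univ, true_and] at hp
    obtain ⟨h1, h2, h3⟩ := hp
    simp only [hT, Finset.mem_filter, SimpleGraph.mem_edgeFinset, SimpleGraph.mem_edgeSet]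
    refine ⟨h2, fun v hv => ?_⟩
    rw [Sym2.mem_iff] at hv
    rcases hv with rfl | rfl
    · exact (G.mem_neighborFinset x v).mpr h1
    · exact (G.mem_neighborFinset x v).mpr h3.symm
  rw [Finset.card_eq_sum_card_fiberwise (f := fun p : V × V => Sym2.mk p.1 p.2) hmaps]
  have hfiber : ∀ e ∈ T, (S.filter fun p => Sym2.mk p.1 p.2 = e).card = 2 := by
    intro e he
    induction e with
    | _ y z =>
      simp only [hT, Finset.mem_filter, SimpleGraph.mem_edgeFinset,
        SimpleGraph.mem_edgeSet] at he
      obtain ⟨hyz, hmem⟩ := he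
      have hxy : G.Adj x y := (G.mem_neighborFinset x y).mp (hmem y (Sym2.mem_mk_left y z))
      have hxz : G.Adj x z := (G.mem_neighborFinset x z).mp (hmem z (Sym2.mem_mk_right y z))
      have hne : y ≠ z := G.ne_of_adj hyz
      have heq : S.filter (fun p => Sym2.mk p.1 p.2 = s(y,z)) = {(y,z),(z,y)} := by
        ext ⟨a, b⟩
        simp only [hS, Finset.mem_filter, Finset.mem_univ, true_and, Finset.mem_insert,
          Finset.mem_singleton, Prod.mk.injEq]
        constructor
        · rintro ⟨-, h⟩
          rcases Sym2.eq_iff.mp h with ⟨rfl, rfl⟩ | ⟨rfl, rfl⟩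
          · exact Or.inl ⟨rfl, rfl⟩
          · exact Or.inr ⟨rfl, rfl⟩
        · rintro (⟨rfl, rfl⟩ | ⟨rfl, rfl⟩)
          · exact ⟨⟨hxy, hyz, hxz.symm⟩, rfl⟩
          · exact ⟨⟨hxz, hyz.symm, hxy.symm⟩, Sym2.eq_swap⟩
      rw [heq, Finset.card_insert_of_notMem (by simp [hne]), Finset.card_singleton]
  rw [Finset.sum_congr rfl hfiber, Finset.sum_const, smul_eq_mul, mul_comm]


section
variable {ι : Type*} [Fintype ι] [DecidableEq ι]

lemma my_trace_conj (U : Matrix.unitaryGroup ι ℝ) (M : Matrix ι ι ℝ) :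
    ((U : Matrix ι ι ℝ) * M * star (U : Matrix ι ι ℝ)).trace = M.trace := by
  rw [Matrix.trace_mul_cycle, Matrix.mem_unitaryGroup_iff'.mp U.2, one_mul]

lemma my_conj_mul (U : Matrix.unitaryGroup ι ℝ) (M N : Matrix ι ι ℝ) :
    ((U : Matrix ι ι ℝ) * M * star (U : Matrix ι ι ℝ)) *
      ((U : Matrix ι ι ℝ) * N * star (U : Matrix ι ι ℝ))
    = (U : Matrix ι ι ℝ) * (M * N) * star (U : Matrix ι ι ℝ) := by
  have h : star (U : Matrix ι ι ℝ) * (U : Matrix ι ι ℝ) = 1 :=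
    Matrix.mem_unitaryGroup_iff'.mp U.2
  have h2 : ∀ X : Matrix ι ι ℝ, star (U : Matrix ι ι ℝ) * ((U : Matrix ι ι ℝ) * X) = X :=
    fun X => by rw [← mul_assoc, h, one_mul]
  simp only [mul_assoc, h2]

lemma my_conj_smul (U : Matrix.unitaryGroup ι ℝ) (r : ℝ) (M : Matrix ι ι ℝ) :
    r • ((U : Matrix ι ι ℝ) * M * star (U : Matrix ι ι ℝ))
      = (U : Matrix ι ι ℝ) * (r • M) * star (U : Matrix ι ι ℝ) := by
  rw [Matrix.mul_smul, Matrix.smul_mul]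

lemma my_conj_add (U : Matrix.unitaryGroup ι ℝ) (M N : Matrix ι ι ℝ) :
    (U : Matrix ι ι ℝ) * M * star (U : Matrix ι ι ℝ)
      + (U : Matrix ι ι ℝ) * N * star (U : Matrix ι ι ℝ)
    = (U : Matrix ι ι ℝ) * (M + N) * star (U : Matrix ι ι ℝ) := by
  rw [mul_add, add_mul]

lemma my_conj_one (U : Matrix.unitaryGroup ι ℝ) :
    (1 : Matrix ι ι ℝ) = (U : Matrix ι ι ℝ) * 1 * star (U : Matrix ι ι ℝ) := by
  rw [mul_one, Matrix.mem_unitaryGroup_iff.mp U.2]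

lemma my_star_eq_transpose (U : Matrix ι ι ℝ) : star U = Uᵀ := by
  ext i j
  simp [Matrix.star_eq_conjTranspose, Matrix.conjTranspose_apply]

/-- quadratic form of a conjugated diagonal matrix -/
lemma my_qform (U : Matrix.unitaryGroup ι ℝ) (d : ι → ℝ) (w : ι → ℝ) :
    w ⬝ᵥ (((U : Matrix ι ι ℝ) * Matrix.diagonal d * star (U : Matrix ι ι ℝ)) *ᵥ w)
      = ∑ i, d i * (star (U : Matrix ι ι ℝ) *ᵥ w) i ^ 2 := by
  set u := star (U : Matrix ι ι ℝ) *ᵥ w with hu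
  have h1 : ((U : Matrix ι ι ℝ) * Matrix.diagonal d * star (U : Matrix ι ι ℝ)) *ᵥ w
      = (U : Matrix ι ι ℝ) *ᵥ (Matrix.diagonal d *ᵥ u) := by
    rw [hu, Matrix.mulVec_mulVec, Matrix.mulVec_mulVec]
  rw [h1, Matrix.dotProduct_mulVec, ← Matrix.mulVec_transpose,
    ← my_star_eq_transpose, ← hu, dotProduct]
  refine Finset.sum_congr rfl fun i _ => ?_
  rw [Matrix.mulVec_diagonal]
  ring

end

end AuxLemmas

set_option maxHeartbeats 2000000 in
/-- Let `t ≥ 1` and let `G` be a finite simple graph whose adjacency matrix has spectrum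
`{(4t+1)^1, (2t−1)^{2t}, (−1)^{(t+1)^2}, (−3)^{t^2}}`. Then for every vertex `x` of `G`, the
number of edges of `G` joining two neighbors of `x` equals `4t^2 + 2t`. -/
theorem stmt_9 (t : ℕ) (ht : 1 ≤ t) {V : Type*} [Fintype V] [DecidableEq V]
    (G : SimpleGraph V) [DecidableRel G.Adj]
    (hchar : (G.adjMatrix ℝ).charpoly =
      (X - C (4 * (t : ℝ) + 1)) * (X - C (2 * (t : ℝ) - 1)) ^ (2 * t) *
        (X + 1) ^ ((t + 1) ^ 2) * (X + 3) ^ (t ^ 2)) :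
    ∀ x : V,
      (G.edgeFinset.filter fun e => ∀ v ∈ e, v ∈ G.neighborFinset x).card =
        4 * t ^ 2 + 2 * t := by
  intro x
  classical
  set A := G.adjMatrix ℝ with hAdef
  have hH : A.IsHermitian := by
    ext i j
    simp [hAdef, Matrix.conjTranspose_apply, SimpleGraph.adjMatrix_apply, G.adj_comm]
  set μ : V → ℝ := hH.eigenvalues with hμdef
  set U := hH.eigenvectorUnitary with hUdef
  have hspec : A = (U : Matrix V V ℝ) * Matrix.diagonal μ * star (U : Matrix V V ℝ) := by
    have h := hH.spectral_theorem
    rwa [show RCLike.ofReal ∘ μ = μ by funext i; simp] at h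
  -- eigenvalue multiset
  have hpoly : (∏ i, (X - C (μ i))) =
      (X - C (4 * (t : ℝ) + 1)) * (X - C (2 * (t : ℝ) - 1)) ^ (2 * t) *
        (X + 1) ^ ((t + 1) ^ 2) * (X + 3) ^ (t ^ 2) := by
    rw [← my_charpoly_diagonal μ, ← my_charpoly_conj U (Matrix.diagonal μ), ← hspec, hchar]
  have hm := my_roots_eq t μ hpoly
  set k : ℝ := 4*(t:ℝ)+1 with hkdef
  -- cardinality
  have hcardR : (Fintype.card V : ℝ) = 2*(t:ℝ)^2 + 4*(t:ℝ) + 2 := by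
    rw [my_card_eigen μ t hm]; push_cast; ring
  have hNpos : (0:ℝ) < (Fintype.card V : ℝ) := by rw [hcardR]; positivity
  -- trace of A*A
  have htr2 : (A * A).trace = ∑ i, (μ i)^2 := by
    rw [hspec, my_conj_mul, my_trace_conj, Matrix.diagonal_mul_diagonal,
      Matrix.trace_diagonal]
    exact Finset.sum_congr rfl fun i _ => (sq (μ i)).symm ▸ rfl
  have hsum2 : ∑ i, (μ i)^2 = k * (Fintype.card V : ℝ) := by
    rw [my_sum_eigen μ t hm (fun s => s^2), hcardR, hkdef]; push_cast; ring
  -- sum of degrees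
  have hdegsum : ∑ y : V, (G.degree y : ℝ) = k * (Fintype.card V : ℝ) := by
    rw [← hsum2, ← htr2, Matrix.trace]
    exact Finset.sum_congr rfl fun y _ =>
      by rw [Matrix.diag_apply, ← SimpleGraph.adjMatrix_mul_self_apply_self]
  -- regularity
  set onev : V → ℝ := fun _ => 1 with honev
  set v : V → ℝ := star (U : Matrix V V ℝ) *ᵥ onev with hvdef
  have hconjdiff : k • (1 : Matrix V V ℝ) - A
      = (U : Matrix V V ℝ) * Matrix.diagonal (fun i => k - μ i) * star (U : Matrix V V ℝ) := by
    have hd : k • (1 : Matrix V V ℝ) = Matrix.diagonal (fun _ : V => k) := by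
      ext i j
      rcases eq_or_ne i j with rfl | h
      · simp
      · simp [Matrix.diagonal_apply_ne _ h, Matrix.one_apply_ne h]
    rw [hspec]
    nth_rewrite 1 [my_conj_one U]
    rw [my_conj_smul, hd, ← Matrix.sub_mul, ← Matrix.mul_sub, Matrix.diagonal_sub]
  have hmv1 : A *ᵥ onev = fun y => (G.degree y : ℝ) := by
    funext y
    rw [hAdef, honev, show ((fun _ : V => (1:ℝ)) = Function.const V (1:ℝ)) from rfl,
      SimpleGraph.adjMatrix_mulVec_const_apply, mul_one]
  have hqsum : ∑ i, (k - μ i) * (v i)^2 = 0 := by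
    have h1 : ∑ i, (k - μ i) * (v i)^2
        = onev ⬝ᵥ ((k • (1 : Matrix V V ℝ) - A) *ᵥ onev) := by
      rw [hconjdiff, my_qform U (fun i => k - μ i) onev, hvdef]
    rw [h1]
    have h2 : (k • (1 : Matrix V V ℝ) - A) *ᵥ onev = fun y => k - (G.degree y : ℝ) := by
      funext y
      rw [Matrix.sub_mulVec, Matrix.smul_mulVec, Matrix.one_mulVec, hmv1]
      simp only [Pi.sub_apply, Pi.smul_apply, honev, smul_eq_mul, mul_one]
    rw [h2, dotProduct]
    simp only [honev, one_mul]
    rw [Finset.sum_sub_distrib, Finset.sum_const, hdegsum]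
    simp [nsmul_eq_mul, mul_comm]
  have hterm : ∀ i ∈ Finset.univ, 0 ≤ (k - μ i) * (v i)^2 := by
    intro i _
    have := my_mem_eigen μ t ht hm i
    have h0 : (0:ℝ) ≤ (t:ℝ) := Nat.cast_nonneg t
    rcases this with h | h | h | h <;> rw [h] <;> nlinarith [sq_nonneg (v i)]
  have hzero : ∀ i, (k - μ i) * v i = 0 := by
    have := (Finset.sum_eq_zero_iff_of_nonneg hterm).mp hqsum
    intro i
    have hi := this i (Finset.mem_univ i)
    rcases mul_eq_zero.mp (show ((k - μ i) * v i) * v i = 0 by rw [← hi]; ring) with h | h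
    · exact h
    · rw [h, mul_zero]
  have hreg : A *ᵥ onev = k • onev := by
    have h1 : (k • (1 : Matrix V V ℝ) - A) *ᵥ onev = 0 := by
      rw [hconjdiff, ← Matrix.mulVec_mulVec, ← Matrix.mulVec_mulVec, ← hvdef]
      have : Matrix.diagonal (fun i => k - μ i) *ᵥ v = 0 := by
        funext i
        rw [Matrix.mulVec_diagonal]
        exact hzero i
      rw [this, Matrix.mulVec_zero]
    have h2 : A *ᵥ onev = k • ((1 : Matrix V V ℝ) *ᵥ onev) - ((k • (1 : Matrix V V ℝ) - A) *ᵥ onev) := by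
      rw [Matrix.sub_mulVec, Matrix.smul_mulVec]
      abel
    rw [h2, h1, Matrix.one_mulVec, sub_zero]
  have hdeg : ∀ y : V, (G.degree y : ℝ) = k := by
    intro y
    have h3 := congrFun hreg y
    rw [hmv1] at h3
    simpa [honev] using h3
  -- Part 2: the matrix B
  set c2 : ℝ := 5 - 2*(t:ℝ) with hc2
  set c1 : ℝ := 7 - 8*(t:ℝ) with hc1
  set c0 : ℝ := 3 - 6*(t:ℝ) with hc0
  set qf : ℝ → ℝ := fun s => s^3 + c2*s^2 + c1*s + c0 with hqf
  have hqffact : ∀ s : ℝ, qf s = (s - (2*(t:ℝ)-1)) * (s + 1) * (s + 3) := by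
    intro s
    rw [hqf]
    simp only
    rw [hc2, hc1, hc0]
    ring
  set B : Matrix V V ℝ := A^3 + c2 • A^2 + c1 • A + c0 • (1:Matrix V V ℝ) with hB
  have hdiaginner : Matrix.diagonal μ * Matrix.diagonal μ * Matrix.diagonal μ
      + c2 • (Matrix.diagonal μ * Matrix.diagonal μ) + c1 • Matrix.diagonal μ
      + c0 • (1 : Matrix V V ℝ)
      = Matrix.diagonal (fun i => qf (μ i)) := by
    simp only [Matrix.diagonal_mul_diagonal]
    ext i j
    rcases eq_or_ne i j with rfl | h
    · simp only [Matrix.add_apply, Matrix.smul_apply, Matrix.diagonal_apply_eq,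
        Matrix.one_apply_eq, smul_eq_mul, hqf]
      ring
    · simp [Matrix.diagonal_apply_ne _ h, Matrix.one_apply_ne h]
  have hBspec : B = (U : Matrix V V ℝ) * Matrix.diagonal (fun i => qf (μ i))
      * star (U : Matrix V V ℝ) := by
    have h2 : A^2 = (U : Matrix V V ℝ) * (Matrix.diagonal μ * Matrix.diagonal μ)
        * star (U : Matrix V V ℝ) := by
      rw [pow_two]
      nth_rewrite 1 [hspec]
      nth_rewrite 1 [hspec]
      rw [my_conj_mul]
    have h3 : A^3 = (U : Matrix V V ℝ)
        * (Matrix.diagonal μ * Matrix.diagonal μ * Matrix.diagonal μ)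
        * star (U : Matrix V V ℝ) := by
      rw [pow_succ, h2]
      nth_rewrite 1 [hspec]
      rw [my_conj_mul]
    rw [hB, h3, h2]
    nth_rewrite 1 [hspec]
    nth_rewrite 1 [my_conj_one U]
    rw [my_conj_smul, my_conj_smul, my_conj_smul, my_conj_add, my_conj_add, my_conj_add,
      hdiaginner]
  have htrB : B.trace = qf k := by
    rw [hBspec, my_trace_conj, Matrix.trace_diagonal, my_sum_eigen μ t hm qf]
    have z1 : qf (2*(t:ℝ)-1) = 0 := by rw [hqffact]; ring
    have z2 : qf (-1:ℝ) = 0 := by rw [hqffact]; ring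
    have z3 : qf (-3:ℝ) = 0 := by rw [hqffact]; ring
    rw [z1, z2, z3]
    ring
  have hqfpos : ∀ i, 0 ≤ qf (μ i) := by
    intro i
    have h0 : (0:ℝ) ≤ (t:ℝ) := Nat.cast_nonneg t
    rcases my_mem_eigen μ t ht hm i with h | h | h | h
    · rw [h, hqffact]
      nlinarith [pow_nonneg h0 3, pow_nonneg h0 2, h0]
    · have hz : qf (μ i) = 0 := by rw [h, hqffact]; ring
      exact hz.ge
    · have hz : qf (μ i) = 0 := by rw [h, hqffact]; ring
      exact hz.ge
    · have hz : qf (μ i) = 0 := by rw [h, hqffact]; ring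
      exact hz.ge
  have hPSD : ∀ w : V → ℝ, 0 ≤ w ⬝ᵥ (B *ᵥ w) := by
    intro w
    rw [hBspec, my_qform]
    exact Finset.sum_nonneg fun i _ => mul_nonneg (hqfpos i) (sq_nonneg _)
  have hB1 : B *ᵥ onev = qf k • onev := by
    have ha2 : A^2 *ᵥ onev = (k^2) • onev := by
      rw [pow_two, ← Matrix.mulVec_mulVec, hreg, Matrix.mulVec_smul, hreg, smul_smul, ← sq]
    have ha3 : A^3 *ᵥ onev = (k^3) • onev := by
      rw [pow_succ, ← Matrix.mulVec_mulVec, hreg, Matrix.mulVec_smul, ha2, smul_smul,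
        show k * k^2 = k^3 by ring]
    rw [hB, Matrix.add_mulVec, Matrix.add_mulVec, Matrix.add_mulVec,
      Matrix.smul_mulVec, Matrix.smul_mulVec, Matrix.smul_mulVec,
      ha3, ha2, hreg, Matrix.one_mulVec]
    funext y
    simp only [Pi.add_apply, Pi.smul_apply, honev, smul_eq_mul, mul_one, hqf]
    try ring
  set N : ℝ := (Fintype.card V : ℝ) with hNdef
  have hNne : N ≠ 0 := ne_of_gt hNpos
  set cc : ℝ := qf k with hccdef
  clear_value v B cc qf N onev U μ A c2 c1 c0 k
  have hBsymm : Bᵀ = B := by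
    rw [hB, hAdef]
    simp [Matrix.transpose_add, Matrix.transpose_smul, Matrix.transpose_pow,
      Matrix.transpose_one, SimpleGraph.transpose_adjMatrix]
  have hcol : ∀ y, ∑ z, B z y = cc := by
    intro y
    have h1 := congrFun hB1 y
    have h2 : (B *ᵥ onev) y = ∑ z, B y z := by
      simp [Matrix.mulVec, dotProduct, honev]
    have h3 : ∑ z, B z y = ∑ z, B y z := by
      refine Finset.sum_congr rfl fun z _ => ?_
      have := congrFun (congrFun hBsymm z) y
      rw [← this]
      rfl
    rw [h3, ← h2, h1]
    simp [honev, hccdef]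
  have honedot : onev ⬝ᵥ onev = N := by
    simp [dotProduct, honev, hNdef]
  have hdiag_ge : ∀ y, cc / N ≤ B y y := by
    intro y
    have h := hPSD (Pi.single y 1 - (1/N) • onev)
    have hmv : B *ᵥ (Pi.single y 1 - (1/N) • onev)
        = (fun z => B z y) - (cc/N) • onev := by
      rw [Matrix.mulVec_sub, Matrix.mulVec_smul, hB1]
      congr 1
      · funext z
        rw [Matrix.mulVec_single]
        simp
      · rw [smul_smul]
        congr 1
        field_simp
    rw [hmv] at h
    simp only [dotProduct_sub, sub_dotProduct, smul_dotProduct,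
      dotProduct_smul, smul_eq_mul] at h
    have hsc : Pi.single y (1:ℝ) ⬝ᵥ (fun z => B z y) = B y y := by
      rw [single_dotProduct, one_mul]
    have hoc : onev ⬝ᵥ (fun z => B z y) = cc := by
      simpa [dotProduct, honev] using hcol y
    have hso : Pi.single y (1:ℝ) ⬝ᵥ onev = 1 := by
      rw [single_dotProduct, one_mul, honev]
    rw [hsc, hoc, hso, honedot] at h
    have e1 : (1/N) * cc = cc / N := by rw [div_mul_eq_mul_div, one_mul]
    have e3 : (1/N) * N = 1 := by field_simp
    rw [e3] at h
    linarith [h, e1]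
  have hdiag_eq : B x x = cc / N := by
    have hsum0 : ∑ y : V, (B y y - cc/N) = 0 := by
      rw [Finset.sum_sub_distrib, Finset.sum_const]
      have hds : ∑ y : V, B y y = cc := by
        rw [← htrB, Matrix.trace]
        rfl
      rw [hds, Finset.card_univ, nsmul_eq_mul, ← hNdef]
      field_simp
      ring
    have hnn : ∀ y ∈ Finset.univ, 0 ≤ B y y - cc/N :=
      fun y _ => sub_nonneg.mpr (hdiag_ge y)
    have := (Finset.sum_eq_zero_iff_of_nonneg hnn).mp hsum0 x (Finset.mem_univ x)
    linarith
  have hA2xx : (A^2) x x = k := by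
    rw [pow_two, hAdef, SimpleGraph.adjMatrix_mul_self_apply_self, hdeg x]
  have hAxx : A x x = 0 := by simp [hAdef]
  have hentry : B x x = (A^3) x x + c2 * k + c0 := by
    rw [hB]
    simp only [Matrix.add_apply, Matrix.smul_apply, Matrix.one_apply_eq, smul_eq_mul]
    rw [hA2xx, hAxx]
    ring
  have hA3xx : (A^3) x x = 8*(t:ℝ)^2 + 4*(t:ℝ) := by
    have h1 : (A^3) x x = cc/N - c2*k - c0 := by
      rw [← hdiag_eq, hentry]; ring
    rw [h1, hccdef, hqffact k, hkdef, hcardR, hc2, hc0]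
    have hden : (2*(t:ℝ)^2 + 4*(t:ℝ) + 2) ≠ 0 := by positivity
    field_simp
    ring
  have hcount : (A^3) x x = ((Finset.univ.filter fun p : V × V =>
      G.Adj x p.1 ∧ G.Adj p.1 p.2 ∧ G.Adj p.2 x).card : ℝ) := by
    rw [show A^3 = A*A*A from by rw [pow_succ, pow_two], Finset.card_filter]
    push_cast
    rw [Fintype.sum_prod_type, Matrix.mul_apply]
    simp_rw [Matrix.mul_apply, Finset.sum_mul]
    rw [Finset.sum_comm]
    refine Finset.sum_congr rfl fun y _ => Finset.sum_congr rfl fun z _ => ?_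
    by_cases h1 : G.Adj x y <;> by_cases h2 : G.Adj y z <;> by_cases h3 : G.Adj z x <;>
      simp [hAdef, SimpleGraph.adjMatrix_apply, h1, h2, h3]
  have h2M := my_card_pairs G x
  have hfin : ((Finset.univ.filter fun p : V × V =>
      G.Adj x p.1 ∧ G.Adj p.1 p.2 ∧ G.Adj p.2 x).card : ℝ)
      = ((2 * (4 * t ^ 2 + 2 * t) : ℕ) : ℝ) := by
    rw [← hcount, hA3xx]
    push_cast
    ring
  have hfinN : (Finset.univ.filter fun p : V × V =>
      G.Adj x p.1 ∧ G.Adj p.1 p.2 ∧ G.Adj p.2 x).card = 2 * (4 * t ^ 2 + 2 * t) :=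
    Nat.cast_injective hfin
  omega
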